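/- Let n be a positive integer. The ratio of Abelian integrals A_n(h)/A_0(h) tends to n+1 as h tends to p₁ from the right, and tends to 2(n+1)(n+2)/(3n+4) as h tends to 0 from the left. -/

import Mathlib

open Set intervalIntegral

noncomputable def phiF (n : ℕ) (u : ℝ) : ℝ :=
  -u ^ 2 / 2 + u ^ (n + 2) / (((n : ℝ) + 1) * ((n : ℝ) + 2))

lemma phiF_hasDerivAt (n : ℕ) (u : ℝ) :
    HasDerivAt (phiF n) (u * (u ^ n - ((n : ℝ) + 1)) / ((n : ℝ) + 1)) u := by
  have h1 := ((hasDerivAt_pow 2 u).neg.div_const 2).add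
    ((hasDerivAt_pow (n + 2) u).div_const (((n : ℝ) + 1) * ((n : ℝ) + 2)))
  have hne1 : ((n : ℝ) + 1) ≠ 0 := by positivity
  have hne2 : ((n : ℝ) + 2) ≠ 0 := by positivity
  refine h1.congr_deriv ?_
  have : n + 2 - 1 = n + 1 := rfl
  rw [this]
  push_cast
  field_simp
  ring

lemma phiF_continuous (n : ℕ) : Continuous (phiF n) := by
  unfold phiF; fun_prop

lemma phiF_strictAntiOn (n : ℕ) (hn : 1 ≤ n) {a : ℝ} (ha0 : 0 < a) (han : a ^ n = (n : ℝ) + 1) :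
    StrictAntiOn (phiF n) (Icc 0 a) := by
  apply strictAntiOn_of_deriv_neg (convex_Icc 0 a) (phiF_continuous n).continuousOn
  intro x hx
  rw [interior_Icc] at hx
  rw [(phiF_hasDerivAt n x).deriv]
  have hxn : x ^ n < (n : ℝ) + 1 := by
    rw [← han]
    exact pow_lt_pow_left₀ hx.2 hx.1.le (by omega)
  have h1 : x * (x ^ n - ((n : ℝ) + 1)) < 0 :=
    mul_neg_of_pos_of_neg hx.1 (by linarith)
  exact div_neg_of_neg_of_pos h1 (by positivity)

lemma phiF_strictMonoOn (n : ℕ) (hn : 1 ≤ n) {a : ℝ} (ha0 : 0 < a) (han : a ^ n = (n : ℝ) + 1) :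
    StrictMonoOn (phiF n) (Ici a) := by
  apply strictMonoOn_of_deriv_pos (convex_Ici a) (phiF_continuous n).continuousOn
  intro x hx
  rw [interior_Ici] at hx
  rw [(phiF_hasDerivAt n x).deriv]
  have hxn : ((n : ℝ) + 1) < x ^ n := by
    rw [← han]
    exact pow_lt_pow_left₀ hx ha0.le (by omega)
  have h1 : 0 < x * (x ^ n - ((n : ℝ) + 1)) :=
    mul_pos (ha0.trans hx) (by linarith)
  exact div_pos h1 (by positivity)

lemma sqrt_add_le' (x y : ℝ) (hy : 0 ≤ y) :
    Real.sqrt (x + y) ≤ Real.sqrt x + Real.sqrt y := by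
  rcases le_or_gt x 0 with hx | hx
  · have h1 : Real.sqrt (x + y) ≤ Real.sqrt y :=
      Real.sqrt_le_sqrt (by linarith)
    have := Real.sqrt_nonneg x
    linarith
  · have h1 : x + y ≤ (Real.sqrt x + Real.sqrt y) ^ 2 := by
      have hx2 : Real.sqrt x ^ 2 = x := Real.sq_sqrt hx.le
      have hy2 : Real.sqrt y ^ 2 = y := Real.sq_sqrt hy
      nlinarith [Real.sqrt_nonneg x, Real.sqrt_nonneg y]
    calc Real.sqrt (x + y) ≤ Real.sqrt ((Real.sqrt x + Real.sqrt y) ^ 2) :=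
          Real.sqrt_le_sqrt h1
      _ = Real.sqrt x + Real.sqrt y := Real.sqrt_sq (by positivity)

lemma rpow_three_halves (t : ℝ) (ht : 0 ≤ t) :
    t ^ ((3 : ℝ) / 2) = t * Real.sqrt t := by
  rcases eq_or_lt_of_le ht with h | h
  · rw [← h, Real.zero_rpow (by norm_num), Real.sqrt_zero, mul_zero]
  · rw [Real.sqrt_eq_rpow, ← Real.rpow_one_add' h.le (by norm_num)]
    norm_num

lemma phiF_zero (n : ℕ) : phiF n 0 = 0 := by
  simp [phiF]

lemma phiF_at_a (n : ℕ) {a : ℝ} (han : a ^ n = (n : ℝ) + 1) :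
    phiF n a = -(n : ℝ) * a ^ 2 / (2 * ((n : ℝ) + 2)) := by
  have hne1 : ((n : ℝ) + 1) ≠ 0 := by positivity
  have hne2 : ((n : ℝ) + 2) ≠ 0 := by positivity
  unfold phiF
  have h : a ^ (n + 2) = ((n : ℝ) + 1) * a ^ 2 := by rw [pow_add, han]
  rw [h]
  field_simp
  ring

lemma phiF_at_B (n : ℕ) {b : ℝ} (hbn : b ^ n = ((n : ℝ) + 1) * ((n : ℝ) + 2) / 2) :
    phiF n b = 0 := by
  have hne1 : ((n : ℝ) + 1) ≠ 0 := by positivity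
  have hne2 : ((n : ℝ) + 2) ≠ 0 := by positivity
  unfold phiF
  have h : b ^ (n + 2) = (((n : ℝ) + 1) * ((n : ℝ) + 2) / 2) * b ^ 2 := by rw [pow_add, hbn]
  rw [h]
  field_simp
  ring

lemma J_identity (n : ℕ) (hn : 1 ≤ n) (B : ℝ) (hB0 : 0 < B) :
    2 * (∫ x in (0:ℝ)..B, x ^ (0+1) * Real.sqrt (1 - x ^ n / B ^ n))
      = ((3 * (n:ℝ) + 4) / (2 * B ^ n))
        * ∫ x in (0:ℝ)..B, x ^ (n+1) * Real.sqrt (1 - x ^ n / B ^ n) := by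
  have hBnpos : (0:ℝ) < B ^ n := by positivity
  have hJint : ∀ (k : ℕ), IntervalIntegrable
      (fun u : ℝ => u ^ k * Real.sqrt (1 - u ^ n / B ^ n)) MeasureTheory.volume 0 B := by
    intro k
    exact ((continuous_pow k).mul (Real.continuous_sqrt.comp
      (continuous_const.sub ((continuous_pow n).div_const _)))).intervalIntegrable 0 B
  have hu2 : ∀ x ∈ Set.uIcc (0:ℝ) B, HasDerivAt (fun x : ℝ => x ^ 2) (2 * x) x := by
    intro x _
    simpa using hasDerivAt_pow 2 x
  have hGder : ∀ x : ℝ, HasDerivAt (fun u : ℝ => 1 - u ^ n / B ^ n)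
      (-(↑n * x ^ (n-1) / B ^ n)) x := by
    intro x
    exact ((hasDerivAt_pow n x).div_const (B ^ n)).const_sub 1
  have hHder : ∀ x ∈ Set.uIcc (0:ℝ) B,
      HasDerivAt (fun u : ℝ => (1 - u ^ n / B ^ n) ^ ((3:ℝ)/2))
      (((3:ℝ)/2) * Real.sqrt (1 - x ^ n / B ^ n) * (-(↑n * x ^ (n-1) / B ^ n))) x := by
    intro x _
    have h1 := (Real.hasDerivAt_rpow_const (x := 1 - x ^ n / B ^ n) (p := (3:ℝ)/2)
      (Or.inr (by norm_num))).comp x (hGder x)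
    simp only [Function.comp_def] at h1
    refine h1.congr_deriv ?_
    rw [Real.sqrt_eq_rpow]
    norm_num
  have hv'int : IntervalIntegrable
      (fun x : ℝ => ((3:ℝ)/2) * Real.sqrt (1 - x ^ n / B ^ n) * (-(↑n * x ^ (n-1) / B ^ n)))
      MeasureTheory.volume 0 B := by
    apply Continuous.intervalIntegrable
    apply Continuous.mul
    · exact continuous_const.mul (Real.continuous_sqrt.comp
        (continuous_const.sub ((continuous_pow n).div_const _)))
    · exact ((continuous_const.mul (continuous_pow (n-1))).div_const _).neg
  have hibp := intervalIntegral.integral_deriv_mul_eq_sub hu2 hHder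
    ((continuous_const.mul continuous_id).intervalIntegrable 0 B) hv'int
  have hibp0 : (∫ x in (0:ℝ)..B, (2 * x * ((1 - x ^ n / B ^ n) ^ ((3:ℝ)/2))
      + x ^ 2 * (((3:ℝ)/2) * Real.sqrt (1 - x ^ n / B ^ n) * (-(↑n * x ^ (n-1) / B ^ n))))) = 0 := by
    rw [hibp]
    rw [show (1 - B ^ n / B ^ n : ℝ) = 0 by rw [div_self hBnpos.ne']; ring,
      Real.zero_rpow (by norm_num : ((3:ℝ)/2) ≠ 0)]
    ring
  have heq2 : Set.EqOn
      (fun x : ℝ => 2 * x * ((1 - x ^ n / B ^ n) ^ ((3:ℝ)/2))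
        + x ^ 2 * (((3:ℝ)/2) * Real.sqrt (1 - x ^ n / B ^ n) * (-(↑n * x ^ (n-1) / B ^ n))))
      (fun x : ℝ => 2 * (x ^ (0+1) * Real.sqrt (1 - x ^ n / B ^ n))
        - ((3 * (n:ℝ) + 4) / (2 * B ^ n)) * (x ^ (n+1) * Real.sqrt (1 - x ^ n / B ^ n)))
      (Set.uIcc 0 B) := by
    intro x hx
    rw [Set.uIcc_of_le hB0.le] at hx
    have hGnn : 0 ≤ 1 - x ^ n / B ^ n := by
      rw [sub_nonneg, div_le_one hBnpos]
      exact pow_le_pow_left₀ hx.1 hx.2 n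
    simp only
    rw [rpow_three_halves _ hGnn]
    have h2 : x ^ (n+1) = x ^ 2 * x ^ (n-1) := by
      rw [← pow_add]
      congr 1
      omega
    have h1 : x ^ n = x * x ^ (n-1) := by
      rw [← pow_succ']
      congr 1
      omega
    rw [h2, h1]
    set b := B ^ n with hbdef
    have hbne : b ≠ 0 := hBnpos.ne'
    set y := x ^ (n-1) with hydef
    set s := Real.sqrt (1 - x * y / b) with hsdef
    field_simp
    ring
  have hsplit : (∫ x in (0:ℝ)..B, (2 * (x ^ (0+1) * Real.sqrt (1 - x ^ n / B ^ n))
      - ((3 * (n:ℝ) + 4) / (2 * B ^ n)) * (x ^ (n+1) * Real.sqrt (1 - x ^ n / B ^ n))))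
      = 2 * (∫ x in (0:ℝ)..B, x ^ (0+1) * Real.sqrt (1 - x ^ n / B ^ n))
        - ((3 * (n:ℝ) + 4) / (2 * B ^ n))
          * ∫ x in (0:ℝ)..B, x ^ (n+1) * Real.sqrt (1 - x ^ n / B ^ n) := by
    rw [intervalIntegral.integral_sub ((hJint (0+1)).const_mul _) ((hJint (n+1)).const_mul _),
      intervalIntegral.integral_const_mul, intervalIntegral.integral_const_mul]
  have h0 := hibp0
  rw [intervalIntegral.integral_congr heq2, hsplit] at h0
  linarith

lemma J_ratio (n : ℕ) (hn : 1 ≤ n) (B : ℝ) (hB0 : 0 < B)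
    (hBn : B ^ n = ((n:ℝ)+1) * ((n:ℝ)+2) / 2) :
    (2 * ∫ x in (0:ℝ)..B, x ^ (n+1) * Real.sqrt (1 - x ^ n / B ^ n))
      / (2 * ∫ x in (0:ℝ)..B, x ^ (0+1) * Real.sqrt (1 - x ^ n / B ^ n))
      = 2 * ((n:ℝ) + 1) * ((n:ℝ) + 2) / (3 * (n:ℝ) + 4) := by
  have hBnpos : (0:ℝ) < B ^ n := by positivity
  have hJint : IntervalIntegrable
      (fun u : ℝ => u ^ (0+1) * Real.sqrt (1 - u ^ n / B ^ n)) MeasureTheory.volume 0 B :=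
    ((continuous_pow (0+1)).mul (Real.continuous_sqrt.comp
      (continuous_const.sub ((continuous_pow n).div_const _)))).intervalIntegrable 0 B
  have hJ0pos : 0 < ∫ x in (0:ℝ)..B, x ^ (0+1) * Real.sqrt (1 - x ^ n / B ^ n) := by
    apply intervalIntegral_pos_of_pos_on hJint _ hB0
    intro x hx
    have hGpos : 0 < 1 - x ^ n / B ^ n := by
      rw [sub_pos, div_lt_one hBnpos]
      exact pow_lt_pow_left₀ hx.2 hx.1.le (by omega)
    exact mul_pos (pow_pos hx.1 _) (Real.sqrt_pos.mpr hGpos)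
  have hkey := J_identity n hn B hB0
  set J0 := ∫ x in (0:ℝ)..B, x ^ (0+1) * Real.sqrt (1 - x ^ n / B ^ n) with hJ0def
  set Jn := ∫ x in (0:ℝ)..B, x ^ (n+1) * Real.sqrt (1 - x ^ n / B ^ n) with hJndef
  have h34 : (3 * (n:ℝ) + 4) ≠ 0 := by positivity
  have hJ0ne : J0 ≠ 0 := hJ0pos.ne'
  have hJn : Jn = 4 * B ^ n / (3 * (n:ℝ) + 4) * J0 := by
    field_simp at hkey ⊢
    linarith
  rw [hJn, hBn]
  field_simp
  ring
theorem stmt_18 (n : ℕ) (hn : 1 ≤ n) (Φ : ℝ → ℝ)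
    (hΦ : ∀ u : ℝ, Φ u = -u ^ 2 / 2 + u ^ (n + 2) / (((n : ℝ) + 1) * ((n : ℝ) + 2)))
    (a B p₁ : ℝ) (ha : a = ((n : ℝ) + 1) ^ ((1 : ℝ) / n))
    (hB : B = (((n : ℝ) + 1) * ((n : ℝ) + 2) / 2) ^ ((1 : ℝ) / n))
    (hp₁ : p₁ = -(n : ℝ) * ((n : ℝ) + 1) ^ ((2 : ℝ) / n) / (2 * ((n : ℝ) + 2)))
    (α β : ℝ → ℝ)
    (hα : ∀ h ∈ Set.Ioo p₁ (0 : ℝ), α h ∈ Set.Ioo (0 : ℝ) a ∧ Φ (α h) = h)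
    (hβ : ∀ h ∈ Set.Ioo p₁ (0 : ℝ), β h ∈ Set.Ioo a B ∧ Φ (β h) = h)
    (A : ℕ → ℝ → ℝ)
    (hA : ∀ (m : ℕ) (h : ℝ),
      A m h = 2 * ∫ u in (α h)..(β h), u ^ m * Real.sqrt (2 * (h - Φ u))) :
    Filter.Tendsto (fun h => A n h / A 0 h) (nhdsWithin p₁ (Set.Ioi p₁))
      (nhds ((n : ℝ) + 1)) ∧
    Filter.Tendsto (fun h => A n h / A 0 h) (nhdsWithin 0 (Set.Iio 0))
      (nhds (2 * ((n : ℝ) + 1) * ((n : ℝ) + 2) / (3 * (n : ℝ) + 4))) := by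
  have hΦf : Φ = phiF n := funext fun u => (hΦ u).trans rfl
  subst hΦf
  have hnR : (1 : ℝ) ≤ (n : ℝ) := by exact_mod_cast hn
  have hnne : (n : ℝ) ≠ 0 := by positivity
  -- powers of a and B
  have ha0 : 0 < a := by
    rw [ha]; positivity
  have han : a ^ n = (n : ℝ) + 1 := by
    rw [ha, ← Real.rpow_natCast (((n : ℝ) + 1) ^ ((1 : ℝ) / n)) n,
      ← Real.rpow_mul (by positivity), one_div, inv_mul_cancel₀ hnne, Real.rpow_one]
  have hB0 : 0 < B := by rw [hB]; positivity
  have hBn : B ^ n = ((n : ℝ) + 1) * ((n : ℝ) + 2) / 2 := by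
    rw [hB, ← Real.rpow_natCast ((((n : ℝ) + 1) * ((n : ℝ) + 2) / 2) ^ ((1 : ℝ) / n)) n,
      ← Real.rpow_mul (by positivity), one_div, inv_mul_cancel₀ hnne, Real.rpow_one]
  have haB : a < B := by
    have h1 : a ^ n < B ^ n := by rw [han, hBn]; nlinarith
    exact lt_of_pow_lt_pow_left₀ n hB0.le h1
  have hpa : phiF n a = p₁ := by
    rw [phiF_at_a n han, hp₁, ha, ← Real.rpow_natCast (((n : ℝ) + 1) ^ ((1 : ℝ) / n)) 2,
      ← Real.rpow_mul (by positivity)]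
    norm_num
    rw [mul_comm ((n:ℝ)⁻¹) 2, div_eq_mul_inv (2:ℝ)]
  have hpB : phiF n B = 0 := phiF_at_B n hBn
  have hp₁0 : p₁ < 0 := by
    rw [← hpa, phiF_at_a n han]
    have : 0 < (n : ℝ) * a ^ 2 := by positivity
    apply div_neg_of_neg_of_pos (by linarith) (by positivity)
  have hanti : StrictAntiOn (phiF n) (Set.Icc 0 a) := phiF_strictAntiOn n hn ha0 han
  have hmono : StrictMonoOn (phiF n) (Set.Ici a) := phiF_strictMonoOn n hn ha0 han
  -- limits of α and β at p₁ from the right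
  have hαa : Filter.Tendsto α (nhdsWithin p₁ (Set.Ioi p₁)) (nhds a) := by
    rw [Metric.tendsto_nhdsWithin_nhds]
    intro ε hε
    set ε' := min (ε / 2) (a / 2) with hε'def
    have hε'p : 0 < ε' := lt_min (by linarith) (by linarith)
    have hε'a : ε' ≤ a / 2 := min_le_right _ _
    have hmem1 : a - ε' ∈ Set.Icc 0 a := ⟨by linarith, by linarith⟩
    have hmema : a ∈ Set.Icc 0 a := ⟨ha0.le, le_refl a⟩
    have hph : p₁ < phiF n (a - ε') := by
      rw [← hpa]; exact hanti hmem1 hmema (by linarith)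
    refine ⟨min (phiF n (a - ε') - p₁) (-p₁), lt_min (by linarith) (by linarith), ?_⟩
    intro h hh hdist
    rw [Real.dist_eq] at hdist ⊢
    have hhp : p₁ < h := hh
    have habs : h - p₁ < min (phiF n (a - ε') - p₁) (-p₁) := by
      rw [abs_of_pos (by linarith)] at hdist; exact hdist
    have hh0 : h < 0 := by
      have := min_le_right (phiF n (a - ε') - p₁) (-p₁); linarith
    obtain ⟨hαmem, hαval⟩ := hα h ⟨hhp, hh0⟩
    have hαIcc : α h ∈ Set.Icc 0 a := ⟨hαmem.1.le, hαmem.2.le⟩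
    have hlt : phiF n (α h) < phiF n (a - ε') := by
      rw [hαval]
      have := min_le_left (phiF n (a - ε') - p₁) (-p₁); linarith
    have h2 : a - ε' < α h := (hanti.lt_iff_gt hαIcc hmem1).mp hlt
    have : |α h - a| = a - α h := by rw [abs_of_nonpos (by linarith [hαmem.2])]; ring
    rw [this]
    have := min_le_left (ε / 2) (a / 2)
    linarith
  have hβa : Filter.Tendsto β (nhdsWithin p₁ (Set.Ioi p₁)) (nhds a) := by
    rw [Metric.tendsto_nhdsWithin_nhds]
    intro ε hε
    set ε' := min (ε / 2) ((B - a) / 2) with hε'def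
    have hε'p : 0 < ε' := lt_min (by linarith) (by linarith)
    have hε'a : ε' ≤ (B - a) / 2 := min_le_right _ _
    have hmem1 : a + ε' ∈ Set.Ici a := by simp [Set.mem_Ici]; linarith
    have hmema : a ∈ Set.Ici a := Set.mem_Ici.mpr (le_refl a)
    have hph : p₁ < phiF n (a + ε') := by
      rw [← hpa]; exact hmono hmema hmem1 (by linarith)
    refine ⟨min (phiF n (a + ε') - p₁) (-p₁), lt_min (by linarith) (by linarith), ?_⟩
    intro h hh hdist
    rw [Real.dist_eq] at hdist ⊢
    have hhp : p₁ < h := hh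
    have habs : h - p₁ < min (phiF n (a + ε') - p₁) (-p₁) := by
      rw [abs_of_pos (by linarith)] at hdist; exact hdist
    have hh0 : h < 0 := by
      have := min_le_right (phiF n (a + ε') - p₁) (-p₁); linarith
    obtain ⟨hβmem, hβval⟩ := hβ h ⟨hhp, hh0⟩
    have hβIci : β h ∈ Set.Ici a := Set.mem_Ici.mpr hβmem.1.le
    have hlt : phiF n (β h) < phiF n (a + ε') := by
      rw [hβval]
      have := min_le_left (phiF n (a + ε') - p₁) (-p₁); linarith
    have h2 : β h < a + ε' := (hmono.lt_iff_lt hβIci hmem1).mp hlt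
    have : |β h - a| = β h - a := by rw [abs_of_nonneg (by linarith [hβmem.1])]
    rw [this]
    have := min_le_left (ε / 2) ((B - a) / 2)
    linarith [hβmem.1]
  -- limits of α and β at 0 from the left
  have hα0 : Filter.Tendsto α (nhdsWithin 0 (Set.Iio 0)) (nhds 0) := by
    rw [Metric.tendsto_nhdsWithin_nhds]
    intro ε hε
    set ε' := min (ε / 2) (a / 2) with hε'def
    have hε'p : 0 < ε' := lt_min (by linarith) (by linarith)
    have hε'a : ε' ≤ a / 2 := min_le_right _ _
    have hmem1 : ε' ∈ Set.Icc 0 a := ⟨hε'p.le, by linarith⟩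
    have hmem0 : (0 : ℝ) ∈ Set.Icc 0 a := ⟨le_refl _, ha0.le⟩
    have hmema : a ∈ Set.Icc 0 a := ⟨ha0.le, le_refl a⟩
    have hph : phiF n ε' < 0 := by
      have := hanti hmem0 hmem1 hε'p; rw [phiF_zero] at this; linarith
    have hph2 : p₁ < phiF n ε' := by
      rw [← hpa]; exact hanti hmem1 hmema (by linarith)
    refine ⟨-phiF n ε', by linarith, ?_⟩
    intro h hh hdist
    rw [Real.dist_eq] at hdist ⊢
    have hh0 : h < 0 := hh
    have habs : -h < -phiF n ε' := by
      rw [sub_zero, abs_of_neg hh0] at hdist; exact hdist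
    obtain ⟨hαmem, hαval⟩ := hα h ⟨by linarith, hh0⟩
    have hαIcc : α h ∈ Set.Icc 0 a := ⟨hαmem.1.le, hαmem.2.le⟩
    have hlt : phiF n ε' < phiF n (α h) := by rw [hαval]; linarith
    have h2 : α h < ε' := (hanti.lt_iff_gt hmem1 hαIcc).mp hlt
    rw [sub_zero, abs_of_pos hαmem.1]
    have := min_le_left (ε / 2) (a / 2)
    linarith
  have hβB : Filter.Tendsto β (nhdsWithin 0 (Set.Iio 0)) (nhds B) := by
    rw [Metric.tendsto_nhdsWithin_nhds]
    intro ε hε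
    set ε' := min (ε / 2) ((B - a) / 2) with hε'def
    have hε'p : 0 < ε' := lt_min (by linarith) (by linarith)
    have hε'a : ε' ≤ (B - a) / 2 := min_le_right _ _
    have hmem1 : B - ε' ∈ Set.Ici a := Set.mem_Ici.mpr (by linarith)
    have hmemB : B ∈ Set.Ici a := Set.mem_Ici.mpr haB.le
    have hmema : a ∈ Set.Ici a := Set.mem_Ici.mpr (le_refl a)
    have hph : phiF n (B - ε') < 0 := by
      have := hmono hmem1 hmemB (by linarith); rw [hpB] at this; linarith
    have hph2 : p₁ < phiF n (B - ε') := by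
      rw [← hpa]; exact hmono hmema hmem1 (by linarith)
    refine ⟨-phiF n (B - ε'), by linarith, ?_⟩
    intro h hh hdist
    rw [Real.dist_eq] at hdist ⊢
    have hh0 : h < 0 := hh
    have habs : -h < -phiF n (B - ε') := by
      rw [sub_zero, abs_of_neg hh0] at hdist; exact hdist
    obtain ⟨hβmem, hβval⟩ := hβ h ⟨by linarith, hh0⟩
    have hβIci : β h ∈ Set.Ici a := Set.mem_Ici.mpr hβmem.1.le
    have hlt : phiF n (B - ε') < phiF n (β h) := by rw [hβval]; linarith
    have h2 : B - ε' < β h := (hmono.lt_iff_lt hmem1 hβIci).mp hlt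
    have : |β h - B| = B - β h := by rw [abs_of_nonpos (by linarith [hβmem.2])]; ring
    rw [this]
    have := min_le_left (ε / 2) ((B - a) / 2)
    linarith
  -- integrability
  have hint : ∀ (m : ℕ) (h : ℝ) (x y : ℝ), IntervalIntegrable
      (fun u => u ^ m * Real.sqrt (2 * (h - phiF n u))) MeasureTheory.volume x y := by
    intro m h x y
    exact ((continuous_pow m).mul (Real.continuous_sqrt.comp
      (continuous_const.mul (continuous_const.sub (phiF_continuous n))))).intervalIntegrable x y
  -- positivity of the integrand inside the oval
  have hposW : ∀ h ∈ Set.Ioo p₁ 0, ∀ u ∈ Set.Ioo (α h) (β h), 0 < 2 * (h - phiF n u) := by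
    intro h hh u hu
    obtain ⟨hαm, hαv⟩ := hα h hh
    obtain ⟨hβm, hβv⟩ := hβ h hh
    rcases le_or_gt u a with hua | hua
    · have h1 : phiF n u < phiF n (α h) :=
        hanti ⟨hαm.1.le, hαm.2.le⟩ ⟨by linarith [hαm.1, hu.1], hua⟩ hu.1
      rw [hαv] at h1; linarith
    · have h1 : phiF n u < phiF n (β h) :=
        hmono (Set.mem_Ici.mpr hua.le) (Set.mem_Ici.mpr hβm.1.le) hu.2
      rw [hβv] at h1; linarith
  have hA0pos : ∀ h ∈ Set.Ioo p₁ 0, 0 < A 0 h := by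
    intro h hh
    rw [hA]
    have hαβ : α h < β h := lt_trans (hα h hh).1.2 (hβ h hh).1.1
    have hpos : 0 < ∫ u in (α h)..(β h), u ^ 0 * Real.sqrt (2 * (h - phiF n u)) := by
      apply intervalIntegral_pos_of_pos_on (hint 0 h _ _) _ hαβ
      intro u hu
      rw [pow_zero, one_mul]
      exact Real.sqrt_pos.mpr (hposW h hh u hu)
    linarith
  have hbound : ∀ h ∈ Set.Ioo p₁ 0,
      (α h) ^ n * A 0 h ≤ A n h ∧ A n h ≤ (β h) ^ n * A 0 h := by
    intro h hh
    obtain ⟨hαm, hαv⟩ := hα h hh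
    obtain ⟨hβm, hβv⟩ := hβ h hh
    have hαβ : α h < β h := lt_trans hαm.2 hβm.1
    rw [hA n h, hA 0 h]
    have hup : (∫ u in (α h)..(β h), u ^ n * Real.sqrt (2 * (h - phiF n u)))
        ≤ (β h) ^ n * ∫ u in (α h)..(β h), u ^ 0 * Real.sqrt (2 * (h - phiF n u)) := by
      rw [← intervalIntegral.integral_const_mul]
      apply intervalIntegral.integral_mono_on hαβ.le (hint n h _ _)
        ((hint 0 h _ _).const_mul _)
      intro u hu
      rw [pow_zero, one_mul]
      have h0u : 0 ≤ u := by linarith [hαm.1, hu.1]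
      exact mul_le_mul_of_nonneg_right (pow_le_pow_left₀ h0u hu.2 n) (Real.sqrt_nonneg _)
    have hlo : (α h) ^ n * (∫ u in (α h)..(β h), u ^ 0 * Real.sqrt (2 * (h - phiF n u)))
        ≤ ∫ u in (α h)..(β h), u ^ n * Real.sqrt (2 * (h - phiF n u)) := by
      rw [← intervalIntegral.integral_const_mul]
      apply intervalIntegral.integral_mono_on hαβ.le ((hint 0 h _ _).const_mul _)
        (hint n h _ _)
      intro u hu
      rw [pow_zero, one_mul]
      have h0α : 0 ≤ α h := hαm.1.le
      exact mul_le_mul_of_nonneg_right (pow_le_pow_left₀ h0α hu.1 n) (Real.sqrt_nonneg _)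
    constructor
    · have e : (α h) ^ n * (2 * ∫ u in (α h)..(β h), u ^ 0 * Real.sqrt (2 * (h - phiF n u)))
          = 2 * ((α h) ^ n * ∫ u in (α h)..(β h), u ^ 0 * Real.sqrt (2 * (h - phiF n u))) := by
        ring
      rw [e]; linarith
    · have e : (β h) ^ n * (2 * ∫ u in (α h)..(β h), u ^ 0 * Real.sqrt (2 * (h - phiF n u)))
          = 2 * ((β h) ^ n * ∫ u in (α h)..(β h), u ^ 0 * Real.sqrt (2 * (h - phiF n u))) := by
        ring
      rw [e]; linarith
  have hIooP : Set.Ioo p₁ 0 ∈ nhdsWithin p₁ (Set.Ioi p₁) :=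
    Ioo_mem_nhdsGT_of_mem ⟨le_refl p₁, hp₁0⟩
  constructor
  · -- first limit
    have h1 : Filter.Tendsto (fun h => (α h) ^ n) (nhdsWithin p₁ (Set.Ioi p₁))
        (nhds ((n : ℝ) + 1)) := by
      have := hαa.pow n
      rwa [han] at this
    have h2 : Filter.Tendsto (fun h => (β h) ^ n) (nhdsWithin p₁ (Set.Ioi p₁))
        (nhds ((n : ℝ) + 1)) := by
      have := hβa.pow n
      rwa [han] at this
    apply tendsto_of_tendsto_of_tendsto_of_le_of_le' h1 h2
    · filter_upwards [hIooP] with h hh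
      exact (le_div_iff₀ (hA0pos h hh)).mpr (hbound h hh).1
    · filter_upwards [hIooP] with h hh
      exact (div_le_iff₀ (hA0pos h hh)).mpr (hbound h hh).2
  · -- second limit
    -- (a) rewrite A m h as an integral over the fixed interval [0, B]
    have hzero1 : ∀ h ∈ Set.Ioo p₁ 0, ∀ m : ℕ,
        (∫ u in (0:ℝ)..(α h), u ^ m * Real.sqrt (2 * (h - phiF n u))) = 0 := by
      intro h hh m
      obtain ⟨hαm, hαv⟩ := hα h hh
      have heq : Set.EqOn (fun u => u ^ m * Real.sqrt (2 * (h - phiF n u)))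
          (fun _ => (0:ℝ)) (Set.uIcc 0 (α h)) := by
        intro u hu
        rw [Set.uIcc_of_le hαm.1.le] at hu
        have hphi : phiF n (α h) ≤ phiF n u := by
          rcases eq_or_lt_of_le hu.2 with he | hlt
          · rw [he]
          · exact (hanti ⟨hu.1, by linarith [hαm.2]⟩ ⟨hαm.1.le, hαm.2.le⟩ hlt).le
        have hs : Real.sqrt (2 * (h - phiF n u)) = 0 := by
          apply Real.sqrt_eq_zero'.mpr
          rw [← hαv]; linarith
        simp only [hs, mul_zero]
      rw [intervalIntegral.integral_congr heq, intervalIntegral.integral_const, smul_zero]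
    have hzero2 : ∀ h ∈ Set.Ioo p₁ 0, ∀ m : ℕ,
        (∫ u in (β h)..B, u ^ m * Real.sqrt (2 * (h - phiF n u))) = 0 := by
      intro h hh m
      obtain ⟨hβm, hβv⟩ := hβ h hh
      have heq : Set.EqOn (fun u => u ^ m * Real.sqrt (2 * (h - phiF n u)))
          (fun _ => (0:ℝ)) (Set.uIcc (β h) B) := by
        intro u hu
        rw [Set.uIcc_of_le hβm.2.le] at hu
        have hphi : phiF n (β h) ≤ phiF n u := by
          rcases eq_or_lt_of_le hu.1 with he | hlt
          · rw [← he]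
          · exact (hmono (Set.mem_Ici.mpr hβm.1.le)
              (Set.mem_Ici.mpr (by linarith [hβm.1])) hlt).le
        have hs : Real.sqrt (2 * (h - phiF n u)) = 0 := by
          apply Real.sqrt_eq_zero'.mpr
          rw [← hβv]; linarith
        simp only [hs, mul_zero]
      rw [intervalIntegral.integral_congr heq, intervalIntegral.integral_const, smul_zero]
    have hAeq : ∀ h ∈ Set.Ioo p₁ 0, ∀ m : ℕ,
        A m h = 2 * ∫ u in (0:ℝ)..B, u ^ m * Real.sqrt (2 * (h - phiF n u)) := by
      intro h hh m
      rw [hA]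
      congr 1
      have e1 := intervalIntegral.integral_add_adjacent_intervals
        (hint m h 0 (α h)) (hint m h (α h) B)
      have e2 := intervalIntegral.integral_add_adjacent_intervals
        (hint m h (α h) (β h)) (hint m h (β h) B)
      rw [← e1, ← e2, hzero1 h hh m, hzero2 h hh m]
      ring
    have hIooM : Set.Ioo p₁ 0 ∈ nhdsWithin 0 (Set.Iio 0) :=
      Ioo_mem_nhdsLT_of_mem ⟨hp₁0, le_refl (0:ℝ)⟩
    -- (b) convergence of A m to the limiting integral
    have hconv : ∀ m : ℕ, Filter.Tendsto (A m) (nhdsWithin 0 (Set.Iio 0))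
        (nhds (2 * ∫ u in (0:ℝ)..B, u ^ m * Real.sqrt (2 * (0 - phiF n u)))) := by
      intro m
      have hKm : IntervalIntegrable (fun u : ℝ => u ^ m) MeasureTheory.volume 0 B :=
        (continuous_pow m).intervalIntegrable 0 B
      set K := ∫ u in (0:ℝ)..B, u ^ m with hK
      set Lm := 2 * ∫ u in (0:ℝ)..B, u ^ m * Real.sqrt (2 * (0 - phiF n u)) with hLm
      have hsq : Filter.Tendsto (fun h : ℝ => Real.sqrt (-(2*h))) (nhdsWithin 0 (Set.Iio 0))
          (nhds 0) := by
        have hc : Continuous fun h : ℝ => Real.sqrt (-(2*h)) :=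
          Real.continuous_sqrt.comp ((continuous_const.mul continuous_id).neg)
        have h2 : Filter.Tendsto (fun h : ℝ => Real.sqrt (-(2*h)))
            (nhdsWithin 0 (Set.Iio 0)) (nhds (Real.sqrt (-(2*(0:ℝ))))) :=
          (hc.tendsto 0).mono_left nhdsWithin_le_nhds
        simpa using h2
      have hlowt : Filter.Tendsto (fun h : ℝ => Lm - 2 * Real.sqrt (-(2*h)) * K)
          (nhdsWithin 0 (Set.Iio 0)) (nhds Lm) := by
        have := tendsto_const_nhds (α := ℝ) (x := Lm)
          (f := nhdsWithin (0:ℝ) (Set.Iio 0)) |>.sub (((hsq.const_mul 2)).mul_const K)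
        simpa using this
      apply tendsto_of_tendsto_of_tendsto_of_le_of_le' hlowt
        (tendsto_const_nhds (x := Lm))
      · -- lower bound
        filter_upwards [hIooM] with h hh
        rw [hAeq h hh m]
        have hmono2 : (∫ u in (0:ℝ)..B, u ^ m * Real.sqrt (2 * (0 - phiF n u)))
            ≤ ∫ u in (0:ℝ)..B,
              (u ^ m * Real.sqrt (2 * (h - phiF n u)) + Real.sqrt (-(2*h)) * u ^ m) := by
          apply intervalIntegral.integral_mono_on hB0.le (hint m 0 0 B)
            ((hint m h 0 B).add (hKm.const_mul _))
          intro u hu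
          have hkey : Real.sqrt (2 * (0 - phiF n u))
              ≤ Real.sqrt (2 * (h - phiF n u)) + Real.sqrt (-(2*h)) := by
            rw [show 2 * (0 - phiF n u) = 2 * (h - phiF n u) + -(2*h) by ring]
            exact sqrt_add_le' _ _ (by linarith [hh.2])
          have h0u : (0:ℝ) ≤ u ^ m := pow_nonneg hu.1 m
          calc u ^ m * Real.sqrt (2 * (0 - phiF n u))
              ≤ u ^ m * (Real.sqrt (2 * (h - phiF n u)) + Real.sqrt (-(2*h))) :=
                mul_le_mul_of_nonneg_left hkey h0u
            _ = u ^ m * Real.sqrt (2 * (h - phiF n u)) + Real.sqrt (-(2*h)) * u ^ m := by ring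
        rw [intervalIntegral.integral_add (hint m h 0 B) (hKm.const_mul _),
          intervalIntegral.integral_const_mul] at hmono2
        rw [hLm]
        linarith
      · -- upper bound
        filter_upwards [hIooM] with h hh
        rw [hAeq h hh m, hLm]
        have hmono2 : (∫ u in (0:ℝ)..B, u ^ m * Real.sqrt (2 * (h - phiF n u)))
            ≤ ∫ u in (0:ℝ)..B, u ^ m * Real.sqrt (2 * (0 - phiF n u)) := by
          apply intervalIntegral.integral_mono_on hB0.le (hint m h 0 B) (hint m 0 0 B)
          intro u hu
          exact mul_le_mul_of_nonneg_left
            (Real.sqrt_le_sqrt (by linarith [hh.2])) (pow_nonneg hu.1 m)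
        linarith
    -- positivity of the limiting denominator
    have hL0pos : 0 < 2 * ∫ u in (0:ℝ)..B, u ^ 0 * Real.sqrt (2 * (0 - phiF n u)) := by
      have hpos : 0 < ∫ u in (0:ℝ)..B, u ^ 0 * Real.sqrt (2 * (0 - phiF n u)) := by
        apply intervalIntegral_pos_of_pos_on (hint 0 0 0 B) _ hB0
        intro u hu
        rw [pow_zero, one_mul]
        apply Real.sqrt_pos.mpr
        have hneg : phiF n u < 0 := by
          rcases le_or_gt u a with hua | hua
          · have h1 := hanti (Set.mem_Icc.mpr ⟨le_refl (0:ℝ), ha0.le⟩) ⟨hu.1.le, hua⟩ hu.1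
            rw [phiF_zero] at h1
            exact h1
          · have h1 := hmono (Set.mem_Ici.mpr hua.le) (Set.mem_Ici.mpr (by linarith)) hu.2
            rw [hpB] at h1
            exact h1
        linarith
      linarith
    -- the limiting integrals, rewritten
    have hBnpos : (0:ℝ) < B ^ n := by positivity
    have hGnn : ∀ x ∈ Set.Icc (0:ℝ) B, 0 ≤ 1 - x ^ n / B ^ n := by
      intro x hx
      rw [sub_nonneg, div_le_one hBnpos]
      exact pow_le_pow_left₀ hx.1 hx.2 n
    have hGid : ∀ u : ℝ, 2 * (0 - phiF n u) = u ^ 2 * (1 - u ^ n / B ^ n) := by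
      intro u
      have hne1 : ((n : ℝ) + 1) ≠ 0 := by positivity
      have hne2 : ((n : ℝ) + 2) ≠ 0 := by positivity
      unfold phiF
      rw [hBn]
      have hp : u ^ (n + 2) = u ^ n * u ^ 2 := by rw [pow_add]
      rw [hp]
      field_simp
      ring
    have hLJ : ∀ m : ℕ, (∫ u in (0:ℝ)..B, u ^ m * Real.sqrt (2 * (0 - phiF n u)))
        = ∫ u in (0:ℝ)..B, u ^ (m+1) * Real.sqrt (1 - u ^ n / B ^ n) := by
      intro m
      apply intervalIntegral.integral_congr
      intro u hu
      rw [Set.uIcc_of_le hB0.le] at hu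
      simp only
      rw [hGid u, Real.sqrt_mul (sq_nonneg u), Real.sqrt_sq hu.1, pow_succ]
      ring
    have hJint : ∀ (k : ℕ), IntervalIntegrable
        (fun u : ℝ => u ^ k * Real.sqrt (1 - u ^ n / B ^ n)) MeasureTheory.volume 0 B := by
      intro k
      exact ((continuous_pow k).mul (Real.continuous_sqrt.comp
        (continuous_const.sub ((continuous_pow n).div_const _)))).intervalIntegrable 0 B
    have hval : (2 * ∫ u in (0:ℝ)..B, u ^ n * Real.sqrt (2 * (0 - phiF n u)))
        / (2 * ∫ u in (0:ℝ)..B, u ^ 0 * Real.sqrt (2 * (0 - phiF n u)))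
        = 2 * ((n:ℝ) + 1) * ((n:ℝ) + 2) / (3 * (n:ℝ) + 4) := by
      rw [hLJ n, hLJ 0]
      exact J_ratio n hn B hB0 hBn
    rw [← hval]
    exact (hconv n).div (hconv 0) hL0pos.ne'
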